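/- Under these hypotheses, |Σ_{v ∈ F} e^{φ(v) + i b ψ(v)}·h(v) − Σ_{v ∈ F} e^{φ'(v) + i b ψ'(v)}·h'(v)| ≤ e^{ε}·( β · Σ_{v ∈ F} e^{φ'(v)}·H'(v) + (ε + |b|·c) · Σ_{v ∈ F} e^{φ'(v)}·|h'(v)| ), where i is the imaginary unit. -/

import Mathlib

lemma aux_exp_I_sub_one (y : ℝ) : ‖Complex.exp (↑y * Complex.I) - 1‖ ≤ |y| := by
  have h1 : ‖Complex.exp (↑y * Complex.I) - 1‖ ^ 2 = 2 - 2 * Real.cos y := by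
    rw [Complex.sq_norm, Complex.normSq_apply, Complex.exp_mul_I]
    simp [Complex.cos_ofReal_re, Complex.sin_ofReal_re]
    ring_nf
    nlinarith [Real.sin_sq_add_cos_sq y]
  have h2 : ‖Complex.exp (↑y * Complex.I) - 1‖ ^ 2 ≤ y ^ 2 := by
    rw [h1]; nlinarith [Real.one_sub_sq_div_two_le_cos (x := y)]
  calc ‖Complex.exp (↑y * Complex.I) - 1‖
      = Real.sqrt (‖Complex.exp (↑y * Complex.I) - 1‖ ^ 2) := by
        rw [Real.sqrt_sq (norm_nonneg _)]
    _ ≤ Real.sqrt (y ^ 2) := Real.sqrt_le_sqrt h2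
    _ = |y| := Real.sqrt_sq_eq_abs y

lemma aux_exp_real_sub_one {x ε : ℝ} (hx : |x| ≤ ε) : |Real.exp x - 1| ≤ Real.exp ε * ε := by
  have hε : 0 ≤ ε := le_trans (abs_nonneg x) hx
  rcases le_or_gt 0 x with hx0 | hx0
  · have hxε : x ≤ ε := le_trans (le_abs_self x) hx
    have h1 : Real.exp x - 1 ≤ x * Real.exp x := by
      have h0 : -x + 1 ≤ Real.exp (-x) := Real.add_one_le_exp (-x)
      rw [Real.exp_neg] at h0
      have h3 := mul_le_mul_of_nonneg_right h0 (Real.exp_pos x).le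
      rw [inv_mul_cancel₀ (Real.exp_pos x).ne'] at h3
      nlinarith
    have : Real.exp x - 1 ≤ Real.exp ε * ε := by
      have := Real.exp_le_exp.2 hxε
      nlinarith [Real.exp_pos x]
    rw [abs_of_nonneg (by nlinarith [Real.add_one_le_exp x])]
    exact this
  · have hxε : -x ≤ ε := le_trans (neg_le_abs x) hx
    have h1 : 1 - Real.exp x ≤ -x := by nlinarith [Real.add_one_le_exp x]
    have hlt : Real.exp x < 1 := by
      have := Real.exp_lt_exp.2 hx0
      simpa using this
    rw [abs_of_nonpos (by linarith)]
    have : (1:ℝ) ≤ Real.exp ε := Real.one_le_exp hε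
    nlinarith

lemma aux_key {x y ε d : ℝ} (hx : |x| ≤ ε) (hy : |y| ≤ d) :
    ‖Complex.exp (↑x + ↑y * Complex.I) - 1‖ ≤ Real.exp ε * (ε + d) := by
  have hε : 0 ≤ ε := le_trans (abs_nonneg x) hx
  have hdecomp : Complex.exp (↑x + ↑y * Complex.I) - 1
      = Complex.exp ↑x * (Complex.exp (↑y * Complex.I) - 1) + (Complex.exp ↑x - 1) := by
    rw [Complex.exp_add]; ring
  rw [hdecomp]
  calc ‖Complex.exp ↑x * (Complex.exp (↑y * Complex.I) - 1) + (Complex.exp ↑x - 1)‖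
      ≤ ‖Complex.exp ↑x‖ * ‖Complex.exp (↑y * Complex.I) - 1‖
        + ‖Complex.exp ↑x - 1‖ := by
        refine (norm_add_le _ _).trans ?_
        rw [norm_mul]
    _ ≤ Real.exp ε * d + Real.exp ε * ε := by
        have h1 : ‖Complex.exp (↑x : ℂ)‖ = Real.exp x := by
          rw [Complex.norm_exp]; norm_num
        have h2 : ‖(Complex.exp ↑x - 1 : ℂ)‖ = |Real.exp x - 1| := by
          rw [← Complex.ofReal_exp, ← Complex.ofReal_one, ← Complex.ofReal_sub,
            Complex.norm_real, Real.norm_eq_abs]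
        rw [h1, h2]
        have hxe : Real.exp x ≤ Real.exp ε := Real.exp_le_exp.2 (le_trans (le_abs_self x) hx)
        have := aux_exp_I_sub_one y
        have := aux_exp_real_sub_one hx
        have hd : 0 ≤ d := le_trans (abs_nonneg y) hy
        nlinarith [Real.exp_pos x, norm_nonneg (Complex.exp (↑y * Complex.I) - 1)]
    _ = Real.exp ε * (ε + d) := by ring

/-- Finite-sum perturbation estimate at the core of the Lasota–Yorke
inequality of Lemma 5.4(b) for the complex transfer operator. -/
theorem stmt_11 {F : Type*} [Fintype F] [Nonempty F]
    (φ φ' ψ ψ' : F → ℝ) (h h' : F → ℂ) (H' : F → ℝ)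
    (hH' : ∀ v, 0 < H' v)
    (b ε c β : ℝ) (hε : 0 ≤ ε) (hc : 0 ≤ c) (hβ : 0 ≤ β)
    (hφ : ∀ v, |φ v - φ' v| ≤ ε)
    (hψ : ∀ v, |ψ v - ψ' v| ≤ c)
    (hh : ∀ v, ‖h v - h' v‖ ≤ β * H' v) :
    ‖(∑ v, Complex.exp (↑(φ v) + ↑b * ↑(ψ v) * Complex.I) * h v
          - ∑ v, Complex.exp (↑(φ' v) + ↑b * ↑(ψ' v) * Complex.I) * h' v)‖
      ≤ Real.exp ε * (β * ∑ v, Real.exp (φ' v) * H' v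
          + (ε + |b| * c) * ∑ v, Real.exp (φ' v) * ‖h' v‖) := by
  set A : F → ℂ := fun v => Complex.exp (↑(φ v) + ↑b * ↑(ψ v) * Complex.I) with hA
  set A' : F → ℂ := fun v => Complex.exp (↑(φ' v) + ↑b * ↑(ψ' v) * Complex.I) with hA'
  have term_bound : ∀ v, ‖A v * h v - A' v * h' v‖
      ≤ Real.exp ε * (β * (Real.exp (φ' v) * H' v)
          + (ε + |b| * c) * (Real.exp (φ' v) * ‖h' v‖)) := by
    intro v
    have hAabs : ‖A v‖ = Real.exp (φ v) := by
      rw [hA, Complex.norm_exp]; norm_num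
    have hsplit : A v * h v - A' v * h' v = A v * (h v - h' v) + (A v - A' v) * h' v := by
      ring
    have hfac : A v - A' v = A' v *
        (Complex.exp (↑(φ v - φ' v) + ↑(b * (ψ v - ψ' v)) * Complex.I) - 1) := by
      rw [hA, hA', mul_sub, mul_one, ← Complex.exp_add]
      push_cast
      ring_nf
    have hAA' : ‖A v - A' v‖
        ≤ Real.exp (φ' v) * (Real.exp ε * (ε + |b| * c)) := by
      rw [hfac, norm_mul]
      have h1 : ‖A' v‖ = Real.exp (φ' v) := by
        rw [hA', Complex.norm_exp]; norm_num
      rw [h1]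
      refine mul_le_mul_of_nonneg_left ?_ (Real.exp_pos _).le
      refine aux_key (hφ v) ?_
      rw [abs_mul]
      exact mul_le_mul_of_nonneg_left (hψ v) (abs_nonneg b)
    have hexpφ : Real.exp (φ v) ≤ Real.exp ε * Real.exp (φ' v) := by
      rw [← Real.exp_add]
      exact Real.exp_le_exp.2 (by have := (abs_le.1 (hφ v)).2; linarith)
    calc ‖A v * h v - A' v * h' v‖
        ≤ ‖A v‖ * ‖h v - h' v‖
          + ‖A v - A' v‖ * ‖h' v‖ := by
          rw [hsplit]
          refine (norm_add_le _ _).trans ?_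
          rw [norm_mul, norm_mul]
      _ ≤ Real.exp ε * Real.exp (φ' v) * (β * H' v)
          + Real.exp (φ' v) * (Real.exp ε * (ε + |b| * c)) * ‖h' v‖ := by
          gcongr
          · rw [hAabs]; exact hexpφ
          · exact hh v
      _ = Real.exp ε * (β * (Real.exp (φ' v) * H' v)
          + (ε + |b| * c) * (Real.exp (φ' v) * ‖h' v‖)) := by ring
  calc ‖∑ v, A v * h v - ∑ v, A' v * h' v‖
      = ‖∑ v, (A v * h v - A' v * h' v)‖ := by rw [Finset.sum_sub_distrib]
    _ ≤ ∑ v, ‖A v * h v - A' v * h' v‖ :=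
        norm_sum_le _ _
    _ ≤ ∑ v, Real.exp ε * (β * (Real.exp (φ' v) * H' v)
          + (ε + |b| * c) * (Real.exp (φ' v) * ‖h' v‖)) :=
        Finset.sum_le_sum fun v _ => term_bound v
    _ = Real.exp ε * (β * ∑ v, Real.exp (φ' v) * H' v
          + (ε + |b| * c) * ∑ v, Real.exp (φ' v) * ‖h' v‖) := by
        rw [mul_add, Finset.mul_sum, Finset.mul_sum, Finset.mul_sum, Finset.mul_sum,
          ← Finset.sum_add_distrib]
        exact Finset.sum_congr rfl fun v _ => by ring
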